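/- arXiv:2412.01205 — 3 statements merged into one kernel-verified Lean document; each statement's English description precedes it below -/
import Mathlib

section
/- Let (Y,d) be a complete metric space, 𝔇 a neighborhood-closed collection of families of nonempty subsets of Y, and S a continuous non-autonomous dynamical system on Y. If S has a closed 𝔇-pullback absorbing set K ∈ 𝔇 and S is 𝔇-pullback asymptotically compact, then S has a unique 𝔇-pullback attractor A = {A(τ) : τ ∈ ℝ} ∈ 𝔇, and it is given for each τ ∈ ℝ by the ω-limit set A(τ) = ω(K,τ) = ⋂_{s≥0} closure(⋃_{t≥s} S(t,τ−t)(K(τ−t))). -/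
open Filter Topology

/-- A continuous non-autonomous dynamical system `S t τ : Y → Y` (for `t ≥ 0`, `τ ∈ ℝ`). -/
def IsNDS {Y : Type*} [MetricSpace Y] (S : ℝ → ℝ → Y → Y) : Prop :=
  (∀ τ : ℝ, S 0 τ = id) ∧
  (∀ τ s t : ℝ, 0 ≤ s → 0 ≤ t → S (s + t) τ = S t (τ + s) ∘ S s τ) ∧
  (∀ t τ : ℝ, 0 ≤ t → Continuous (S t τ))

/-- A neighborhood-closed collection of families of nonempty subsets of `Y`. -/
def NbhdClosed {Y : Type*} [MetricSpace Y] (𝔇 : Set (ℝ → Set Y)) : Prop :=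
  (∀ D ∈ 𝔇, ∀ τ : ℝ, (D τ).Nonempty) ∧
  (∀ D ∈ 𝔇, ∃ ε > (0:ℝ), ∀ B : ℝ → Set Y,
    (∀ τ : ℝ, (B τ).Nonempty ∧ B τ ⊆ {y : Y | Metric.infDist y (D τ) < ε}) → B ∈ 𝔇)

/-- `K` is a closed `𝔇`-pullback absorbing set for `S`. -/
def IsClosedAbsorbing {Y : Type*} [MetricSpace Y] (S : ℝ → ℝ → Y → Y)
    (𝔇 : Set (ℝ → Set Y)) (K : ℝ → Set Y) : Prop :=
  K ∈ 𝔇 ∧ (∀ τ : ℝ, IsClosed (K τ)) ∧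
  (∀ τ : ℝ, ∀ D ∈ 𝔇, ∃ T > (0:ℝ), ∀ t ≥ T, S t (τ - t) '' D (τ - t) ⊆ K τ)

/-- `S` is `𝔇`-pullback asymptotically compact. -/
def PullbackAsympCompact {Y : Type*} [MetricSpace Y] (S : ℝ → ℝ → Y → Y)
    (𝔇 : Set (ℝ → Set Y)) : Prop :=
  ∀ τ : ℝ, ∀ D ∈ 𝔇, ∀ t : ℕ → ℝ, ∀ x : ℕ → Y,
    Tendsto t atTop atTop → (∀ n, x n ∈ D (τ - t n)) →
    ∃ (y : Y) (φ : ℕ → ℕ), StrictMono φ ∧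
      Tendsto (fun n => S (t (φ n)) (τ - t (φ n)) (x (φ n))) atTop (𝓝 y)

/-- `A` is a `𝔇`-pullback attractor for `S`: it belongs to `𝔇`, has compact sections,
is invariant, and pullback attracts every member of `𝔇` (Hausdorff semidistance → 0). -/
def IsPullbackAttractor {Y : Type*} [MetricSpace Y] (S : ℝ → ℝ → Y → Y)
    (𝔇 : Set (ℝ → Set Y)) (A : ℝ → Set Y) : Prop :=
  A ∈ 𝔇 ∧ (∀ τ : ℝ, IsCompact (A τ)) ∧
  (∀ t : ℝ, 0 ≤ t → ∀ τ : ℝ, S t τ '' A τ = A (τ + t)) ∧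
  (∀ D ∈ 𝔇, ∀ τ : ℝ, ∀ ε > (0:ℝ), ∃ T : ℝ, ∀ t ≥ T, ∀ x ∈ D (τ - t),
    Metric.infDist (S t (τ - t) x) (A τ) < ε)

section OmegaAux

variable {Y : Type*} [MetricSpace Y]

/-- The ω-limit family of `K`. -/
def omegaK (S : ℝ → ℝ → Y → Y) (K : ℝ → Set Y) (τ : ℝ) : Set Y :=
  ⋂ s ∈ Set.Ici (0:ℝ), closure (⋃ t ∈ Set.Ici s, S t (τ - t) '' K (τ - t))

lemma mem_omegaK_of_tendsto (S : ℝ → ℝ → Y → Y) (𝔇 : Set (ℝ → Set Y)) (K : ℝ → Set Y)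
    (hS : IsNDS S)
    (habs : ∀ τ : ℝ, ∀ D ∈ 𝔇, ∃ T > (0:ℝ), ∀ t ≥ T, S t (τ - t) '' D (τ - t) ⊆ K τ)
    {D : ℝ → Set Y} (hD : D ∈ 𝔇) {τ : ℝ} {t : ℕ → ℝ} {x : ℕ → Y} {y : Y}
    (ht : Tendsto t atTop atTop)
    (hx : ∀ n, x n ∈ D (τ - t n))
    (hy : Tendsto (fun n => S (t n) (τ - t n) (x n)) atTop (𝓝 y)) :
    y ∈ omegaK S K τ := by
  simp only [omegaK, Set.mem_iInter, Set.mem_Ici]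
  intro s hs
  obtain ⟨T, hT0, hT⟩ := habs (τ - (s + 1)) D hD
  refine mem_closure_of_tendsto hy ?_
  filter_upwards [ht.eventually_ge_atTop (s + 1 + T)] with n hn
  set r : ℝ := s + 1 with hr
  have h1 : (0:ℝ) ≤ t n - r := by simp only [hr] at hn ⊢; linarith
  have h2 : (0:ℝ) ≤ r := by simp only [hr]; linarith
  have hc := hS.2.1 (τ - t n) (t n - r) r h1 h2
  rw [show t n - r + r = t n by ring, show τ - t n + (t n - r) = τ - r by ring] at hc
  have hz : S (t n - r) (τ - t n) (x n) ∈ K (τ - r) := by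
    have hT' := hT (t n - r) (by simp only [hr] at hn ⊢; linarith)
    rw [show τ - r - (t n - r) = τ - t n by ring] at hT'
    exact hT' ⟨x n, hx n, rfl⟩
  have heq : S (t n) (τ - t n) (x n) = S r (τ - r) (S (t n - r) (τ - t n) (x n)) := by
    rw [hc]; rfl
  rw [heq]
  exact Set.mem_biUnion (Set.mem_Ici.mpr (by simp only [hr]; linarith)) ⟨_, hz, rfl⟩

lemma approx_of_mem_omegaK {S : ℝ → ℝ → Y → Y} {K : ℝ → Set Y} {τ : ℝ} {y : Y}
    (hy : y ∈ omegaK S K τ) (s ε : ℝ) (hs : 0 ≤ s) (hε : 0 < ε) :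
    ∃ (t : ℝ) (x : Y), s ≤ t ∧ x ∈ K (τ - t) ∧ dist (S t (τ - t) x) y < ε := by
  simp only [omegaK, Set.mem_iInter, Set.mem_Ici] at hy
  have := hy s hs
  rw [Metric.mem_closure_iff] at this
  obtain ⟨b, hb, hd⟩ := this ε hε
  simp only [Set.mem_iUnion, Set.mem_image, Set.mem_Ici] at hb
  obtain ⟨t, ht, x, hx, rfl⟩ := hb
  exact ⟨t, x, ht, hx, by rwa [dist_comm]⟩

lemma exists_seq_of_mem_omegaK {S : ℝ → ℝ → Y → Y} {K : ℝ → Set Y} {τ : ℝ} {y : Y}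
    (hy : y ∈ omegaK S K τ) (g : ℕ → ℝ) (hg : ∀ n, 0 ≤ g n) :
    ∃ (t : ℕ → ℝ) (x : ℕ → Y), (∀ n, g n ≤ t n) ∧ (∀ n, x n ∈ K (τ - t n)) ∧
      Tendsto (fun n => S (t n) (τ - t n) (x n)) atTop (𝓝 y) := by
  have key : ∀ n : ℕ, ∃ (t : ℝ) (x : Y), g n ≤ t ∧ x ∈ K (τ - t) ∧
      dist (S t (τ - t) x) y < 1 / (n + 1) :=
    fun n => approx_of_mem_omegaK hy (g n) (1 / (n + 1)) (hg n) (by positivity)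
  choose t x h1 h2 h3 using key
  refine ⟨t, x, h1, h2, ?_⟩
  rw [tendsto_iff_dist_tendsto_zero]
  exact squeeze_zero (fun n => dist_nonneg) (fun n => (h3 n).le)
    tendsto_one_div_add_atTop_nhds_zero_nat

end OmegaAux

/-- If a continuous NDS `S` on a complete metric space, with a neighborhood-closed collection
`𝔇`, has a closed `𝔇`-pullback absorbing set `K ∈ 𝔇` and is `𝔇`-pullback asymptotically
compact, then it has a unique `𝔇`-pullback attractor, given by the ω-limit sets of `K`. -/
theorem exists_unique_pullback_attractor {Y : Type*} [MetricSpace Y] [CompleteSpace Y]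
    (S : ℝ → ℝ → Y → Y) (𝔇 : Set (ℝ → Set Y))
    (hS : IsNDS S) (h𝔇 : NbhdClosed 𝔇) (K : ℝ → Set Y)
    (hK : IsClosedAbsorbing S 𝔇 K) (hAC : PullbackAsympCompact S 𝔇) :
    (∃! A : ℝ → Set Y, IsPullbackAttractor S 𝔇 A) ∧
    IsPullbackAttractor S 𝔇
      (fun τ => ⋂ s ∈ Set.Ici (0:ℝ),
        closure (⋃ t ∈ Set.Ici s, S t (τ - t) '' K (τ - t))) := by
  obtain ⟨hKD, hKcl, hKabs⟩ := hK
  -- nonemptiness of ω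
  have hne : ∀ τ : ℝ, (omegaK S K τ).Nonempty := by
    intro τ
    have ht : Tendsto (fun n : ℕ => (n:ℝ)) atTop atTop := tendsto_natCast_atTop_atTop
    have hxe : ∀ n : ℕ, ∃ x, x ∈ K (τ - (n:ℝ)) := fun n => h𝔇.1 K hKD (τ - n)
    choose x hx using hxe
    obtain ⟨y, φ, hφ, hconv⟩ := hAC τ K hKD _ x ht hx
    exact ⟨y, mem_omegaK_of_tendsto S 𝔇 K hS hKabs hKD
      (ht.comp hφ.tendsto_atTop) (fun n => hx (φ n)) hconv⟩
  -- compactness of ω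
  have hcpt : ∀ τ : ℝ, IsCompact (omegaK S K τ) := by
    intro τ
    have hseq : IsSeqCompact (omegaK S K τ) := by
      intro u hu
      have key : ∀ n : ℕ, ∃ (t : ℝ) (x : Y), (n:ℝ) ≤ t ∧ x ∈ K (τ - t) ∧
          dist (S t (τ - t) x) (u n) < 1 / (n + 1) :=
        fun n => approx_of_mem_omegaK (hu n) n (1/(n+1)) (Nat.cast_nonneg n) (by positivity)
      choose t x h1 h2 h3 using key
      have ht : Tendsto t atTop atTop := tendsto_atTop_mono h1 tendsto_natCast_atTop_atTop
      obtain ⟨y, φ, hφ, hconv⟩ := hAC τ K hKD t x ht h2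
      have hyω : y ∈ omegaK S K τ := mem_omegaK_of_tendsto S 𝔇 K hS hKabs hKD
        (ht.comp hφ.tendsto_atTop) (fun n => h2 (φ n)) hconv
      refine ⟨y, hyω, φ, hφ, ?_⟩
      have hd0 : Tendsto (fun n => dist (S (t (φ n)) (τ - t (φ n)) (x (φ n))) (u (φ n)))
          atTop (𝓝 0) := by
        refine squeeze_zero (fun n => dist_nonneg) (fun n => (h3 (φ n)).le.trans ?_)
          tendsto_one_div_add_atTop_nhds_zero_nat
        have h5 : (n:ℝ) ≤ (φ n : ℝ) := Nat.cast_le.mpr hφ.le_apply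
        exact one_div_le_one_div_of_le (by positivity) (by linarith)
      have : Tendsto (fun n => u (φ n)) atTop (𝓝 y) := by
        rw [tendsto_iff_dist_tendsto_zero]
        have hb : Tendsto (fun n => dist (S (t (φ n)) (τ - t (φ n)) (x (φ n))) (u (φ n))
            + dist (S (t (φ n)) (τ - t (φ n)) (x (φ n))) y) atTop (𝓝 0) := by
          simpa using hd0.add (tendsto_iff_dist_tendsto_zero.mp hconv)
        exact squeeze_zero (fun n => dist_nonneg)
          (fun n => dist_triangle_left _ _ _) hb
      exact this
    exact hseq.isCompact
  -- ω τ ⊆ K τ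
  have hsub : ∀ τ : ℝ, omegaK S K τ ⊆ K τ := by
    intro τ
    obtain ⟨T, hT0, hT⟩ := hKabs τ K hKD
    intro y hy
    have hy' : y ∈ closure (⋃ t ∈ Set.Ici T, S t (τ - t) '' K (τ - t)) := by
      simp only [omegaK, Set.mem_iInter, Set.mem_Ici] at hy
      exact hy T hT0.le
    have hcl : closure (⋃ t ∈ Set.Ici T, S t (τ - t) '' K (τ - t)) ⊆ K τ :=
      closure_minimal (Set.iUnion₂_subset fun t ht => hT t ht) (hKcl τ)
    exact hcl hy'
  -- ω ∈ 𝔇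
  have hmem : omegaK S K ∈ 𝔇 := by
    obtain ⟨ε, hε, hB⟩ := h𝔇.2 K hKD
    refine hB _ (fun τ => ⟨hne τ, fun y hy => ?_⟩)
    have h0 : Metric.infDist y (K τ) = 0 := Metric.infDist_zero_of_mem (hsub τ hy)
    simp only [Set.mem_setOf_eq, h0]; exact hε
  -- attraction
  have hattr : ∀ D ∈ 𝔇, ∀ τ : ℝ, ∀ ε > (0:ℝ), ∃ T : ℝ, ∀ t ≥ T, ∀ x ∈ D (τ - t),
      Metric.infDist (S t (τ - t) x) (omegaK S K τ) < ε := by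
    intro D hD τ ε hε
    by_contra hcon
    push_neg at hcon
    have key : ∀ n : ℕ, ∃ t, (n:ℝ) ≤ t ∧ ∃ x ∈ D (τ - t),
        ε ≤ Metric.infDist (S t (τ - t) x) (omegaK S K τ) := fun n => hcon n
    choose t h1 x h2 h3 using key
    have ht : Tendsto t atTop atTop := tendsto_atTop_mono h1 tendsto_natCast_atTop_atTop
    obtain ⟨y, φ, hφ, hconv⟩ := hAC τ D hD t x ht h2
    have hyω : y ∈ omegaK S K τ := mem_omegaK_of_tendsto S 𝔇 K hS hKabs hD
      (ht.comp hφ.tendsto_atTop) (fun n => h2 (φ n)) hconv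
    have hlim : Tendsto (fun n => Metric.infDist
        (S (t (φ n)) (τ - t (φ n)) (x (φ n))) (omegaK S K τ)) atTop
        (𝓝 (Metric.infDist y (omegaK S K τ))) :=
      ((Metric.continuous_infDist_pt _).tendsto y).comp hconv
    rw [Metric.infDist_zero_of_mem hyω] at hlim
    have := ge_of_tendsto' hlim (fun n => h3 (φ n))
    linarith
  -- invariance
  have hinv : ∀ t : ℝ, 0 ≤ t → ∀ τ : ℝ, S t τ '' omegaK S K τ = omegaK S K (τ + t) := by
    intro t ht τ
    apply Set.Subset.antisymm
    · rintro _ ⟨y, hy, rfl⟩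
      obtain ⟨u, x, h1, h2, h3⟩ := exists_seq_of_mem_omegaK hy (fun n => (n:ℝ))
        (fun n => Nat.cast_nonneg n)
      have hu : Tendsto u atTop atTop := tendsto_atTop_mono h1 tendsto_natCast_atTop_atTop
      have hu0 : ∀ n, 0 ≤ u n := fun n => le_trans (Nat.cast_nonneg n) (h1 n)
      have heq : ∀ n, S (u n + t) (τ + t - (u n + t)) (x n)
          = S t τ (S (u n) (τ - u n) (x n)) := by
        intro n
        have hc := hS.2.1 (τ - u n) (u n) t (hu0 n) ht
        rw [show τ - u n + u n = τ by ring] at hc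
        rw [show τ + t - (u n + t) = τ - u n by ring, hc]; rfl
      have hconv : Tendsto (fun n => S (u n + t) (τ + t - (u n + t)) (x n))
          atTop (𝓝 (S t τ y)) := by
        simp only [heq]
        exact ((hS.2.2 t τ ht).tendsto y).comp h3
      refine mem_omegaK_of_tendsto S 𝔇 K hS hKabs hKD (t := fun n => u n + t)
        (tendsto_atTop_add_const_right _ t hu) ?_ hconv
      intro n
      rw [show τ + t - (u n + t) = τ - u n by ring]; exact h2 n
    · intro y hy
      obtain ⟨u, x, h1, h2, h3⟩ := exists_seq_of_mem_omegaK hy (fun n => (n:ℝ) + t)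
        (fun n => by positivity)
      have hv0 : ∀ n : ℕ, (n:ℝ) ≤ u n - t := fun n => by have := h1 n; linarith
      have hvt : Tendsto (fun n => u n - t) atTop atTop :=
        tendsto_atTop_mono hv0 tendsto_natCast_atTop_atTop
      have hx' : ∀ n, x n ∈ K (τ - (u n - t)) := by
        intro n
        rw [show τ - (u n - t) = τ + t - u n by ring]; exact h2 n
      obtain ⟨z, φ, hφ, hconv⟩ := hAC τ K hKD (fun n => u n - t) x hvt hx'
      have hz : z ∈ omegaK S K τ := mem_omegaK_of_tendsto S 𝔇 K hS hKabs hKD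
        (hvt.comp hφ.tendsto_atTop) (fun n => hx' (φ n)) hconv
      refine ⟨z, hz, ?_⟩
      have heq : ∀ n, S (u n) (τ + t - u n) (x n)
          = S t τ (S (u n - t) (τ - (u n - t)) (x n)) := by
        intro n
        have h2' : (0:ℝ) ≤ u n - t := le_trans (Nat.cast_nonneg n) (hv0 n)
        have hc := hS.2.1 (τ + t - u n) (u n - t) t h2' ht
        rw [show u n - t + t = u n by ring,
          show τ + t - u n + (u n - t) = τ by ring] at hc
        rw [show τ - (u n - t) = τ + t - u n by ring, hc]; rfl
      have hmain : Tendsto (fun n => S t τ (S (u (φ n) - t) (τ - (u (φ n) - t)) (x (φ n))))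
          atTop (𝓝 y) := by
        have h4 : Tendsto (fun n => S (u (φ n)) (τ + t - u (φ n)) (x (φ n)))
            atTop (𝓝 y) := h3.comp hφ.tendsto_atTop
        simpa only [heq] using h4
      have hmain2 : Tendsto
          (fun n => S t τ (S (u (φ n) - t) (τ - (u (φ n) - t)) (x (φ n))))
          atTop (𝓝 (S t τ z)) := ((hS.2.2 t τ ht).tendsto z).comp hconv
      exact tendsto_nhds_unique hmain2 hmain
  have hωattr : IsPullbackAttractor S 𝔇 (omegaK S K) := ⟨hmem, hcpt, hinv, hattr⟩
  -- uniqueness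
  have huniq : ∀ A, IsPullbackAttractor S 𝔇 A → ∀ A', IsPullbackAttractor S 𝔇 A' →
      ∀ τ : ℝ, A τ ⊆ A' τ := by
    intro A hA A' hA' τ y hy
    have hne' : (A' τ).Nonempty := h𝔇.1 A' hA'.1 τ
    have hyd : ∀ ε > (0:ℝ), Metric.infDist y (A' τ) < ε := by
      intro ε hε
      obtain ⟨T, hT⟩ := hA'.2.2.2 A hA.1 τ ε hε
      obtain ⟨n, hn⟩ := exists_nat_ge T
      have hninv : S (n:ℝ) (τ - n) '' A (τ - n) = A τ := by
        have := hA.2.2.1 (n:ℝ) (Nat.cast_nonneg n) (τ - n)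
        rwa [show τ - (n:ℝ) + (n:ℝ) = τ by ring] at this
      rw [← hninv] at hy
      obtain ⟨x, hx, hxe⟩ := hy
      rw [← hxe]
      exact hT n hn x hx
    have h0 : Metric.infDist y (A' τ) = 0 := by
      by_contra h
      have hpos : 0 < Metric.infDist y (A' τ) :=
        lt_of_le_of_ne Metric.infDist_nonneg (Ne.symm h)
      exact absurd (hyd _ hpos) (lt_irrefl _)
    have : y ∈ closure (A' τ) := (Metric.mem_closure_iff_infDist_zero hne').mpr h0
    rwa [IsClosed.closure_eq (hA'.2.1 τ).isClosed] at this
  refine ⟨⟨omegaK S K, hωattr, fun A hA => funext fun τ =>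
    Set.Subset.antisymm (huniq A hA _ hωattr τ) (huniq _ hωattr A hA τ)⟩, hωattr⟩
end

section
/- Let (Y,d) be a complete metric space, 𝔇 a neighborhood-closed collection of families of nonempty subsets of Y, and S a continuous non-autonomous dynamical system on Y having a closed 𝔇-pullback absorbing set K ∈ 𝔇 and being 𝔇-pullback asymptotically compact, so that S has a unique 𝔇-pullback attractor A ∈ 𝔇. If, in addition, there is T > 0 such that S is T-periodic, i.e. S(t, τ+T) = S(t,τ) for all t ≥ 0 and τ ∈ ℝ, and K is T-periodic, i.e. K(τ+T) = K(τ) for all τ ∈ ℝ, then the attractor is T-periodic: A(τ+T) = A(τ) for all τ ∈ ℝ. -/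
open Filter Topology

/-- If in addition both the NDS `S` and the closed absorbing set `K` are `T`-periodic,
then every `𝔇`-pullback attractor (in particular, the unique one) is `T`-periodic. -/
theorem pullback_attractor_periodic {Y : Type*} [MetricSpace Y] [CompleteSpace Y]
    (S : ℝ → ℝ → Y → Y) (𝔇 : Set (ℝ → Set Y))
    (hS : IsNDS S) (h𝔇 : NbhdClosed 𝔇) (K : ℝ → Set Y)
    (hK : IsClosedAbsorbing S 𝔇 K) (hAC : PullbackAsympCompact S 𝔇)
    (T : ℝ) (hT : 0 < T)
    (hSper : ∀ t : ℝ, 0 ≤ t → ∀ τ : ℝ, S t (τ + T) = S t τ)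
    (hKper : ∀ τ : ℝ, K (τ + T) = K τ) :
    ∀ A : ℝ → Set Y, IsPullbackAttractor S 𝔇 A → ∀ τ : ℝ, A (τ + T) = A τ := by
  intro A hA
  obtain ⟨hA𝔇, hcomp, hinv, hattr⟩ := hA
  have hAne : ∀ τ : ℝ, (A τ).Nonempty := fun τ => h𝔇.1 A hA𝔇 τ
  -- A τ ⊆ K τ
  have hAK : ∀ τ : ℝ, A τ ⊆ K τ := by
    intro τ
    obtain ⟨T₀, hT₀, habs⟩ := hK.2.2 τ A hA𝔇
    set t := max T₀ 1 with ht_def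
    have ht0 : (0:ℝ) ≤ t := le_trans zero_le_one (le_max_right _ _)
    have h1 : S t (τ - t) '' A (τ - t) = A τ := by
      have := hinv t ht0 (τ - t)
      rwa [sub_add_cancel] at this
    have := habs t (le_max_left _ _)
    rwa [h1] at this
  obtain ⟨ε, hε, hnbhd⟩ := h𝔇.2 K hK.1
  -- shifted families belong to 𝔇
  have hB𝔇 : (fun τ : ℝ => A (τ + T)) ∈ 𝔇 := by
    apply hnbhd
    intro τ
    refine ⟨hAne _, fun y hy => ?_⟩
    have : y ∈ K τ := by rw [← hKper τ]; exact hAK _ hy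
    simpa [Metric.infDist_zero_of_mem this] using hε
  have hC𝔇 : (fun τ : ℝ => A (τ - T)) ∈ 𝔇 := by
    apply hnbhd
    intro τ
    refine ⟨hAne _, fun y hy => ?_⟩
    have : y ∈ K τ := by
      have := hKper (τ - T)
      rw [sub_add_cancel] at this
      rw [this]; exact hAK _ hy
    simpa [Metric.infDist_zero_of_mem this] using hε
  -- direction 1 : A (τ + T) ⊆ A τ
  have dir1 : ∀ τ : ℝ, A (τ + T) ⊆ A τ := by
    intro τ y hy
    rw [((hcomp τ).isClosed).mem_iff_infDist_zero (hAne τ)]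
    by_contra h0
    have hpos : 0 < Metric.infDist y (A τ) :=
      lt_of_le_of_ne (Metric.infDist_nonneg) (Ne.symm h0)
    obtain ⟨T₀, hat⟩ := hattr _ hB𝔇 τ _ hpos
    set t := max T₀ 1 with ht_def
    have ht0 : (0:ℝ) ≤ t := le_trans zero_le_one (le_max_right _ _)
    have h1 : S t (τ - t + T) '' A (τ - t + T) = A (τ + T) := by
      have := hinv t ht0 (τ - t + T)
      rwa [show τ - t + T + t = τ + T by ring] at this
    rw [← h1] at hy
    obtain ⟨x, hx, hxy⟩ := hy
    have := hat t (le_max_left _ _) x (by simpa using hx)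
    rw [hSper t ht0 (τ - t)] at hxy
    rw [hxy] at this
    exact absurd this (lt_irrefl _)
  -- direction 2 : A (τ - T) ⊆ A τ
  have dir2 : ∀ τ : ℝ, A (τ - T) ⊆ A τ := by
    intro τ y hy
    rw [((hcomp τ).isClosed).mem_iff_infDist_zero (hAne τ)]
    by_contra h0
    have hpos : 0 < Metric.infDist y (A τ) :=
      lt_of_le_of_ne (Metric.infDist_nonneg) (Ne.symm h0)
    obtain ⟨T₀, hat⟩ := hattr _ hC𝔇 τ _ hpos
    set t := max T₀ 1 with ht_def
    have ht0 : (0:ℝ) ≤ t := le_trans zero_le_one (le_max_right _ _)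
    have h1 : S t (τ - t - T) '' A (τ - t - T) = A (τ - T) := by
      have := hinv t ht0 (τ - t - T)
      rwa [show τ - t - T + t = τ - T by ring] at this
    rw [← h1] at hy
    obtain ⟨x, hx, hxy⟩ := hy
    have := hat t (le_max_left _ _) x (by simpa using hx)
    have hper : S t (τ - t) = S t (τ - t - T) := by
      have := hSper t ht0 (τ - t - T)
      rwa [show τ - t - T + T = τ - t by ring] at this
    rw [hper, hxy] at this
    exact absurd this (lt_irrefl _)
  intro τ
  apply subset_antisymm (dir1 τ)
  have := dir2 (τ + T)
  rwa [add_sub_cancel_right] at this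
end

section
/- Let f : ℝ → ℝ be continuously differentiable on [0,1], and let f̄ = ∫₀¹ f(t) dt denote its average over [0,1]. Then ∫₀¹ (f(x) − f̄)² dx ≤ ∫₀¹ (f′(t))² dt. -/
/-- Cauchy–Schwarz type inequality: `(∫₀¹ g)² ≤ ∫₀¹ g²` for `g` continuous on `[0,1]`. -/
lemma sq_integral_le_integral_sq (g : ℝ → ℝ) (hg : ContinuousOn g (Set.Icc (0:ℝ) 1)) :
    (∫ x in (0:ℝ)..1, g x) ^ 2 ≤ ∫ x in (0:ℝ)..1, g x ^ 2 := by
  have huIcc : Set.uIcc (0:ℝ) 1 = Set.Icc (0:ℝ) 1 := Set.uIcc_of_le zero_le_one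
  have hgI : IntervalIntegrable g MeasureTheory.volume 0 1 :=
    (hg.mono huIcc.subset).intervalIntegrable
  have hg2I : IntervalIntegrable (fun x => g x ^ 2) MeasureTheory.volume 0 1 :=
    ((hg.pow 2).mono huIcc.subset).intervalIntegrable
  set m : ℝ := ∫ x in (0:ℝ)..1, g x with hm
  have h0 : 0 ≤ ∫ x in (0:ℝ)..1, (g x - m) ^ 2 :=
    intervalIntegral.integral_nonneg zero_le_one (fun x _ => sq_nonneg _)
  have hexp : ∫ x in (0:ℝ)..1, (g x - m) ^ 2
      = (∫ x in (0:ℝ)..1, g x ^ 2) - 2 * m * m + m ^ 2 * (1 - 0) := by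
    have h1 : ∫ x in (0:ℝ)..1, (g x - m) ^ 2
        = ∫ x in (0:ℝ)..1, (g x ^ 2 - 2 * m * g x + m ^ 2) :=
      intervalIntegral.integral_congr (fun x _ => by ring)
    rw [h1, intervalIntegral.integral_add ((hg2I.sub (hgI.const_mul _))) intervalIntegrable_const,
      intervalIntegral.integral_sub hg2I (hgI.const_mul _),
      intervalIntegral.integral_const_mul, intervalIntegral.integral_const, ← hm]
    simp
  nlinarith [h0, hexp]

/-- One-dimensional Poincaré–Wirtinger inequality on `[0,1]`:
`∫₀¹ (f(x) − f̄)² dx ≤ ∫₀¹ (f′(t))² dt`, where `f̄ = ∫₀¹ f`. -/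
theorem poincare_wirtinger_unit_interval
    (f f' : ℝ → ℝ)
    (hderiv : ∀ t ∈ Set.Icc (0:ℝ) 1, HasDerivWithinAt f (f' t) (Set.Icc (0:ℝ) 1) t)
    (hcont : ContinuousOn f' (Set.Icc (0:ℝ) 1)) :
    ∫ x in (0:ℝ)..1, (f x - ∫ t in (0:ℝ)..1, f t) ^ 2 ≤
      ∫ t in (0:ℝ)..1, (f' t) ^ 2 := by
  have huIcc : Set.uIcc (0:ℝ) 1 = Set.Icc (0:ℝ) 1 := Set.uIcc_of_le zero_le_one
  have hfc : ContinuousOn f (Set.Icc (0:ℝ) 1) :=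
    fun t ht => (hderiv t ht).continuousWithinAt
  set C : ℝ := ∫ t in (0:ℝ)..1, (f' t) ^ 2 with hC
  set A : ℝ := ∫ t in (0:ℝ)..1, |f' t| with hA
  have habs : ContinuousOn (fun t => |f' t|) (Set.Icc (0:ℝ) 1) := hcont.abs
  have hA2 : A ^ 2 ≤ C := by
    have := sq_integral_le_integral_sq (fun t => |f' t|) habs
    simpa [sq_abs] using this
  have hAnonneg : 0 ≤ A :=
    intervalIntegral.integral_nonneg zero_le_one (fun x _ => abs_nonneg _)
  -- FTC bound: for y ≤ x in [0,1], |f x - f y| ≤ A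
  have key : ∀ y ∈ Set.Icc (0:ℝ) 1, ∀ x ∈ Set.Icc (0:ℝ) 1, y ≤ x → |f x - f y| ≤ A := by
    intro y hy x hx hyx
    have hsub : Set.Icc y x ⊆ Set.Icc (0:ℝ) 1 := Set.Icc_subset_Icc hy.1 hx.2
    have hint : IntervalIntegrable f' MeasureTheory.volume y x :=
      (hcont.mono ((Set.uIcc_of_le hyx).subset.trans hsub)).intervalIntegrable
    have hftc : ∫ t in y..x, f' t = f x - f y := by
      apply intervalIntegral.integral_eq_sub_of_hasDeriv_right_of_le hyx
        (hfc.mono hsub) _ hint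
      intro t ht
      have ht' : t ∈ Set.Ioo (0:ℝ) 1 := ⟨lt_of_le_of_lt hy.1 ht.1, lt_of_lt_of_le ht.2 hx.2⟩
      have : HasDerivAt f (f' t) t :=
        (hderiv t (Set.Ioo_subset_Icc_self ht')).hasDerivAt
          (Icc_mem_nhds ht'.1 ht'.2)
      exact this.hasDerivWithinAt
    rw [← hftc]
    calc |∫ t in y..x, f' t| ≤ ∫ t in y..x, |f' t| :=
          intervalIntegral.abs_integral_le_integral_abs hyx
      _ ≤ A := by
          apply intervalIntegral.integral_mono_interval hy.1 hyx hx.2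
          · filter_upwards with t using abs_nonneg _
          · exact (habs.mono huIcc.subset).intervalIntegrable
  have key' : ∀ y ∈ Set.Icc (0:ℝ) 1, ∀ x ∈ Set.Icc (0:ℝ) 1, |f x - f y| ≤ A := by
    intro y hy x hx
    rcases le_total y x with h | h
    · exact key y hy x hx h
    · rw [abs_sub_comm]; exact key x hx y hy h
  -- pointwise bound: (f x - f̄)² ≤ C
  have hfI : IntervalIntegrable f MeasureTheory.volume 0 1 :=
    (hfc.mono huIcc.subset).intervalIntegrable
  have pw : ∀ x ∈ Set.Icc (0:ℝ) 1, (f x - ∫ t in (0:ℝ)..1, f t) ^ 2 ≤ C := by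
    intro x hx
    have hrepr : f x - ∫ t in (0:ℝ)..1, f t = ∫ y in (0:ℝ)..1, (f x - f y) := by
      rw [intervalIntegral.integral_sub intervalIntegrable_const hfI,
        intervalIntegral.integral_const]
      simp
    have habsle : |f x - ∫ t in (0:ℝ)..1, f t| ≤ A := by
      rw [hrepr]
      calc |∫ y in (0:ℝ)..1, (f x - f y)| ≤ ∫ y in (0:ℝ)..1, |f x - f y| :=
            intervalIntegral.abs_integral_le_integral_abs zero_le_one
        _ ≤ ∫ y in (0:ℝ)..1, A := by
            apply intervalIntegral.integral_mono_on zero_le_one _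
              intervalIntegrable_const (fun y hy => key' y hy x hx)
            exact ((continuousOn_const.sub hfc).abs.mono huIcc.subset).intervalIntegrable
        _ = A := by simp
    calc (f x - ∫ t in (0:ℝ)..1, f t) ^ 2 = |f x - ∫ t in (0:ℝ)..1, f t| ^ 2 := (sq_abs _).symm
      _ ≤ A ^ 2 := by apply pow_le_pow_left₀ (abs_nonneg _) habsle
      _ ≤ C := hA2
  -- integrate the pointwise bound
  calc ∫ x in (0:ℝ)..1, (f x - ∫ t in (0:ℝ)..1, f t) ^ 2
      ≤ ∫ _x in (0:ℝ)..1, C := by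
        apply intervalIntegral.integral_mono_on zero_le_one _ intervalIntegrable_const pw
        exact (((hfc.sub continuousOn_const).pow 2).mono huIcc.subset).intervalIntegrable
    _ = C := by simp
end
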